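/- In any trend stationary equilibrium of the two-sector large open economy, the growth rate satisfies G ≥ 1. (Lemma: no trend stationary equilibrium has negative long-run growth.) -/

import Mathlib

open Filter Topology MeasureTheory

/-- **Assumption 1.** `Φ` (the law `μ` of productivity) is an absolutely continuous
cdf on `[0,∞)` with `Φ(z) < 1` for all `z` and a finite mean. -/
structure Assumption1 (μ : Measure ℝ) : Prop where
  prob : IsProbabilityMeasure μ
  supp : μ (Set.Iio 0) = 0
  absCont : μ ≪ MeasureTheory.volume
  lt_one : ∀ z : ℝ, μ (Set.Iic z) < 1
  finite_mean : Integrable id μ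

/-- The cdf `Φ` of the productivity distribution `μ`. -/
noncomputable def Phi (μ : Measure ℝ) (z : ℝ) : ℝ := (μ (Set.Iic z)).toReal

/-- The risk premium `π(R) = ∫ max{0, mz − R} dΦ(z)` on unlevered capital investment. -/
noncomputable def premium (μ : Measure ℝ) (m R : ℝ) : ℝ := ∫ z, max 0 (m * z - R) ∂μ

/-- The leverage threshold `λ̄ = ((1−β)/β)·(∫ max{mz−1, 0} dΦ(z))⁻¹`. -/
noncomputable def lamBar (β m : ℝ) (μ : Measure ℝ) : ℝ :=
  ((1 - β) / β) * (∫ z, max (m * z - 1) 0 ∂μ)⁻¹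

/-- **Trend stationary equilibrium** of the two-sector large open economy with linear
technology `F(K,X) = mK + DX`: gross risk-free rate `R > 1`, growth rate `G > 0`,
threshold `z̄ = R/m` with `Φ(z̄) > 1 − 1/λ`, and sequences of aggregate wealth,
capital, land price, and external savings satisfying the equilibrium conditions,
with `B_t/W_t → 0`. -/
structure TSE (μ : Measure ℝ) (β lam m D : ℝ)
    (R G : ℝ) (W K P B : ℕ → ℝ) : Prop where
  hR : 1 < R
  hG : 0 < G
  hthr : 1 - 1 / lam < Phi μ (R / m)
  hW : ∀ t, 0 < W t
  hP : ∀ t, 0 < P t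
  price : ∀ t, R = (P (t + 1) + D) / P t
  growth : G = β * (R + lam * premium μ m R)
  Wdyn : ∀ t, W (t + 1) = G * W t
  Kdyn : ∀ t, K (t + 1) = β * lam * W t * ∫ z in Set.Ioi (R / m), z ∂μ
  bond : ∀ t, P t + B t = β * (lam * Phi μ (R / m) + 1 - lam) * W t
  wealth : ∀ t, W (t + 1) = m * K (t + 1) + R * (P t + B t)
  hBW : Filter.Tendsto (fun t => B t / W t) Filter.atTop (nhds 0)

/-- **Lemma.** In any trend stationary equilibrium of the two-sector large open
economy, the growth rate satisfies `G ≥ 1`. -/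
theorem tse_growth_ge_one
    (μ : Measure ℝ) (hμ : Assumption1 μ)
    (β lam m D : ℝ) (hβ : β ∈ Set.Ioo (0 : ℝ) 1) (hlam : 1 ≤ lam)
    (hm : 0 < m) (hD : 0 < D)
    (R G : ℝ) (W K P B : ℕ → ℝ)
    (heq : TSE μ β lam m D R G W K P B) :
    1 ≤ G := by
  by_contra hG1
  push_neg at hG1
  obtain ⟨hR, hG, _, hW, hP, price, _, Wdyn, _, bond, _, hBW⟩ := heq
  set c : ℝ := D / (R - 1) with hc
  have hRpos : 0 < R - 1 := by linarith
  have hcpos : 0 < c := div_pos hD hRpos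
  have hRc : R * c = c + D := by rw [hc]; field_simp [hRpos.ne']; ring
  -- price recursion: P (t+1) = R * P t - D
  have prec : ∀ t, P (t + 1) = R * P t - D := by
    intro t
    have h := price t
    field_simp [(hP t).ne'] at h
    linarith
  -- P t ≥ c for all t
  have hPc : ∀ t, c ≤ P t := by
    intro t0
    by_contra hlt
    push_neg at hlt
    set d : ℝ := c - P t0 with hd
    have hdpos : 0 < d := by simp [hd]; linarith
    have key : ∀ n, P (t0 + n) ≤ c - R ^ n * d := by
      intro n
      induction n with
      | zero => simp [hd]
      | succ n ih =>
        have : P (t0 + n + 1) = R * P (t0 + n) - D := prec _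
        have h2 : R * P (t0 + n) ≤ R * (c - R ^ n * d) := by
          apply mul_le_mul_of_nonneg_left ih (by linarith)
        calc P (t0 + (n + 1)) = R * P (t0 + n) - D := by
              rw [← this]; ring_nf
          _ ≤ R * (c - R ^ n * d) - D := by linarith
          _ = c - R ^ (n + 1) * d := by rw [mul_sub, hRc]; ring
    obtain ⟨n, hn⟩ := pow_unbounded_of_one_lt (c / d) hR
    have : P (t0 + n) ≤ c - R ^ n * d := key n
    have : R ^ n * d > c := by
      have := (div_lt_iff₀ hdpos).mp hn
      linarith
    have := hP (t0 + n)
    linarith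
  -- W t = G ^ t * W 0
  have hWt : ∀ t, W t = G ^ t * W 0 := by
    intro t
    induction t with
    | zero => simp
    | succ t ih => rw [Wdyn t, ih]; ring
  -- P t / W t tends to atTop
  have hGlt : G < 1 := hG1
  have hWto : Tendsto (fun t : ℕ => G ^ t * W 0) atTop (𝓝[>] 0) := by
    rw [tendsto_nhdsWithin_iff]
    constructor
    · have := tendsto_pow_atTop_nhds_zero_of_lt_one hG.le hGlt
      simpa using this.mul_const (W 0)
    · exact Filter.Eventually.of_forall fun t =>
        Set.mem_Ioi.mpr (mul_pos (pow_pos hG t) (hW 0))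
  have hdiv : Tendsto (fun t : ℕ => c / (G ^ t * W 0)) atTop atTop := by
    have := Filter.Tendsto.inv_tendsto_nhdsGT_zero hWto
    have h2 := Tendsto.const_mul_atTop hcpos this
    simpa [div_eq_mul_inv] using h2
  have hPW : Tendsto (fun t => P t / W t) atTop atTop := by
    apply tendsto_atTop_mono _ hdiv
    intro t
    rw [← hWt t]
    gcongr
    · exact (hW t).le
    · exact hPc t
  -- But P t / W t converges to a constant
  set L : ℝ := β * (lam * Phi μ (R / m) + 1 - lam) with hL
  have hconv : Tendsto (fun t => P t / W t) atTop (𝓝 L) := by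
    have : ∀ t, P t / W t = L - B t / W t := by
      intro t
      have hb := bond t
      field_simp [(hW t).ne']
      linarith
    simp_rw [this]
    simpa using (tendsto_const_nhds (x := L)).sub hBW
  exact hconv.not_tendsto (disjoint_nhds_atTop L) hPW
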